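/- If A ⊂_s B, then for any hesitant fuzzy element C, writing descending sequences, the j-th largest element of the Torra union B ∪ C is at least the j-th largest element of the Torra union A ∪ C for all j ≤ min(|A ∪ C|, |B ∪ C|); hence (A ∪ C) ⊂_s (B ∪ C) or (A ∪ C) ⊂_t (B ∪ C). -/

import Mathlib

/-- Supremum (maximum) of a multiset of reals in `[0,1]`, defaulting to `0`. -/
noncomputable def msup (A : Multiset ℝ) : ℝ := A.toList.foldr max 0

/-- Infimum (minimum) of a multiset of reals in `[0,1]`, defaulting to `1`. -/
noncomputable def minf (A : Multiset ℝ) : ℝ := A.toList.foldr min 1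

/-- Mean of a multiset of reals. -/
noncomputable def mmean (A : Multiset ℝ) : ℝ := A.sum / A.card

/-- The elements of a multiset sorted in descending order. -/
noncomputable def dsort (A : Multiset ℝ) : List ℝ := (A.sort (· ≤ ·)).reverse

/-- `A ⊂ₛ B`: `|A| ≥ |B|` and the `i`-th largest element of `B` is at least the
`i`-th largest element of `A`, for `i ≤ |B|`. -/
noncomputable def subS (A B : Multiset ℝ) : Prop :=
  B.card ≤ A.card ∧ ∀ i < B.card, (dsort A).getD i 0 ≤ (dsort B).getD i 0

/-- `A ⊂ₜ B`: `|A| < |B|` and the `i`-th largest element of `B` is at least the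
`i`-th largest element of `A`, for `i ≤ |A|`. -/
noncomputable def subT (A B : Multiset ℝ) : Prop :=
  A.card < B.card ∧ ∀ i < A.card, (dsort A).getD i 0 ≤ (dsort B).getD i 0

/-- Torra intersection of two hesitant fuzzy elements (as multisets). -/
noncomputable def tInter (A B : Multiset ℝ) : Multiset ℝ :=
  (A + B).filter (fun h => h ≤ min (msup A) (msup B))

/-- Torra union of two hesitant fuzzy elements (as multisets). -/
noncomputable def tUnion (A B : Multiset ℝ) : Multiset ℝ :=
  (A + B).filter (fun h => max (minf A) (minf B) ≤ h)

/-- Number of elements of `M` that are ≥ `x`. -/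
noncomputable def cnt (M : Multiset ℝ) (x : ℝ) : ℕ := (M.filter (fun y => x ≤ y)).card

lemma coe_dsort (M : Multiset ℝ) : ((dsort M : List ℝ) : Multiset ℝ) = M := by
  unfold dsort
  rw [Multiset.coe_reverse, Multiset.sort_eq]

lemma dsort_sorted (M : Multiset ℝ) : (dsort M).Pairwise (· ≥ ·) := by
  unfold dsort
  rw [List.pairwise_reverse]
  exact Multiset.pairwise_sort (s := M) (r := (· ≤ ·))

lemma dsort_length (M : Multiset ℝ) : (dsort M).length = M.card := by
  unfold dsort
  rw [List.length_reverse, Multiset.length_sort]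

lemma cnt_eq (M : Multiset ℝ) (x : ℝ) :
    cnt M x = (dsort M).countP (fun y => decide (x ≤ y)) := by
  rw [List.countP_eq_length_filter]
  unfold cnt
  conv_lhs => rw [← coe_dsort M]
  rw [Multiset.filter_coe, Multiset.coe_card]

lemma listA {x : ℝ} : ∀ {L : List ℝ}, L.Pairwise (· ≥ ·) → ∀ {j : ℕ}, j < L.length →
    x ≤ L.getD j 0 → j < L.countP (fun y => decide (x ≤ y)) := by
  intro L
  induction L with
  | nil => intro _ j hj; simp at hj
  | cons a t ih =>
    intro hp j hj hx
    rcases List.pairwise_cons.mp hp with ⟨ha, ht⟩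
    rw [List.countP_cons]
    match j with
    | 0 =>
      have hxa : x ≤ a := by simpa using hx
      simp [hxa]
    | Nat.succ k =>
      have hk : k < t.length := by simpa using hj
      have hxk : x ≤ t.getD k 0 := by simpa using hx
      have := ih ht hk hxk
      have hxa : x ≤ a := by
        refine le_trans hxk (ha _ ?_)
        rw [List.getD_eq_getElem t 0 hk]
        exact List.getElem_mem hk
      have hd : (fun y => decide (x ≤ y)) a = true := decide_eq_true hxa
      simp only [hd, if_true]
      omega

lemma listB {x : ℝ} : ∀ {L : List ℝ}, L.Pairwise (· ≥ ·) → ∀ {j : ℕ}, j < L.length →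
    j < L.countP (fun y => decide (x ≤ y)) → x ≤ L.getD j 0 := by
  intro L
  induction L with
  | nil => intro _ j hj; simp at hj
  | cons a t ih =>
    intro hp j hj hc
    rcases List.pairwise_cons.mp hp with ⟨ha, ht⟩
    rw [List.countP_cons] at hc
    match j with
    | 0 =>
      by_cases hxa : x ≤ a
      · simpa using hxa
      · have hd : (fun y => decide (x ≤ y)) a = false := decide_eq_false hxa
        simp only [hd, if_false, Bool.false_eq_true] at hc
        have hc' : 0 < t.countP (fun y => decide (x ≤ y)) := by omega
        rcases List.countP_pos_iff.mp hc' with ⟨b, hb, hxb⟩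
        exact absurd (le_trans (of_decide_eq_true hxb) (ha b hb)) hxa
    | Nat.succ k =>
      have hk : k < t.length := by simpa using hj
      have : k < t.countP (fun y => decide (x ≤ y)) := by
        by_cases hxa : x ≤ a
        · have hd : (fun y => decide (x ≤ y)) a = true := decide_eq_true hxa
          simp only [hd, if_true] at hc
          omega
        · have hd : (fun y => decide (x ≤ y)) a = false := decide_eq_false hxa
          simp only [hd, if_false, Bool.false_eq_true] at hc
          omega
      simpa using ih ht hk this

lemma cnt_getD (M : Multiset ℝ) {j : ℕ} (hj : j < M.card) {x : ℝ}
    (hx : x ≤ (dsort M).getD j 0) : j < cnt M x := by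
  rw [cnt_eq]
  exact listA (dsort_sorted M) (by rw [dsort_length]; exact hj) hx

lemma getD_cnt (M : Multiset ℝ) {j : ℕ} (hj : j < M.card) {x : ℝ}
    (hx : j < cnt M x) : x ≤ (dsort M).getD j 0 := by
  rw [cnt_eq] at hx
  exact listB (dsort_sorted M) (by rw [dsort_length]; exact hj) hx

lemma cnt_anti (M : Multiset ℝ) {x y : ℝ} (h : x ≤ y) : cnt M y ≤ cnt M x := by
  apply Multiset.card_le_card
  apply Multiset.monotone_filter_right
  intro a ha
  exact le_trans h ha

lemma cnt_add (M N : Multiset ℝ) (x : ℝ) : cnt (M + N) x = cnt M x + cnt N x := by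
  unfold cnt
  rw [Multiset.filter_add, Multiset.card_add]

lemma cnt_le_card (M : Multiset ℝ) (x : ℝ) : cnt M x ≤ M.card :=
  Multiset.card_le_card (Multiset.filter_le _ _)

lemma cnt_union (A C : Multiset ℝ) (x : ℝ) :
    cnt (tUnion A C) x = cnt (A + C) (max (max (minf A) (minf C)) x) := by
  unfold tUnion cnt
  rw [Multiset.filter_filter]
  congr 1
  apply Multiset.filter_congr
  intro a _
  constructor
  · rintro ⟨h1, h2⟩; exact max_le h2 h1
  · intro h; exact ⟨le_trans (le_max_right _ _) h, le_trans (le_max_left _ _) h⟩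

lemma card_union (A C : Multiset ℝ) :
    (tUnion A C).card = cnt (A + C) (max (minf A) (minf C)) := rfl

lemma le_minf {v : ℝ} (M : Multiset ℝ) (h1 : v ≤ 1) (h : ∀ b ∈ M, v ≤ b) : v ≤ minf M := by
  unfold minf
  have h' : ∀ b ∈ M.toList, v ≤ b := fun b hb => h b (Multiset.mem_toList.mp hb)
  generalize M.toList = l at h'
  induction l with
  | nil => simpa
  | cons a t ih =>
    simp only [List.foldr_cons]
    exact le_min (h' a (by simp)) (ih (fun b hb => h' b (List.mem_cons_of_mem a hb)))

lemma cnt_mono_subS {A B : Multiset ℝ} (hs : subS A B) (v : ℝ) :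
    min (cnt A v) B.card ≤ cnt B v := by
  set m := min (cnt A v) B.card with hm
  rcases Nat.eq_zero_or_pos m with h0 | hpos
  · omega
  · have hmA : m ≤ cnt A v := min_le_left _ _
    have hmB : m ≤ B.card := min_le_right _ _
    have hm1A : m - 1 < cnt A v := by omega
    have hcardA : m - 1 < A.card := lt_of_lt_of_le hm1A (cnt_le_card A v)
    have h1 : v ≤ (dsort A).getD (m - 1) 0 := getD_cnt A hcardA hm1A
    have hB : m - 1 < B.card := by omega
    have h2 := hs.2 (m - 1) hB
    have h3 := cnt_getD B hB (le_trans h1 h2)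
    omega

theorem stmt13 (A B C : Multiset ℝ) (hA : A ≠ 0) (hB : B ≠ 0) (hC : C ≠ 0)
    (hA1 : ∀ x ∈ A, x ∈ Set.Icc (0:ℝ) 1) (hB1 : ∀ x ∈ B, x ∈ Set.Icc (0:ℝ) 1)
    (hC1 : ∀ x ∈ C, x ∈ Set.Icc (0:ℝ) 1)
    (hs : subS A B) :
    (∀ j < min (tUnion A C).card (tUnion B C).card,
      (dsort (tUnion A C)).getD j 0 ≤ (dsort (tUnion B C)).getD j 0) ∧
    (subS (tUnion A C) (tUnion B C) ∨ subT (tUnion A C) (tUnion B C)) := by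
  have key : ∀ j < min (tUnion A C).card (tUnion B C).card,
      (dsort (tUnion A C)).getD j 0 ≤ (dsort (tUnion B C)).getD j 0 := by
    intro j hj
    have hjA : j < (tUnion A C).card := lt_of_lt_of_le hj (min_le_left _ _)
    have hjB : j < (tUnion B C).card := lt_of_lt_of_le hj (min_le_right _ _)
    set v := (dsort (tUnion A C)).getD j 0 with hv
    set tB := max (minf B) (minf C) with htB
    apply getD_cnt (tUnion B C) hjB
    rw [cnt_union]
    by_cases hvt : v ≤ tB
    · rw [max_eq_left hvt, ← card_union]
      exact hjB
    · push_neg at hvt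
      rw [max_eq_right hvt.le, cnt_add]
      have H1 : j < cnt A v + cnt C v := by
        have h1 : j < cnt (tUnion A C) v := cnt_getD _ hjA le_rfl
        have h2 : cnt (tUnion A C) v ≤ cnt (A + C) v := by
          rw [cnt_union]
          exact cnt_anti _ (le_max_right _ _)
        rw [cnt_add] at h2
        omega
      by_cases hAB : cnt A v ≤ B.card
      · have h3 := cnt_mono_subS hs v
        rw [min_eq_left hAB] at h3
        omega
      · exfalso
        push_neg at hAB
        have h3 := cnt_mono_subS hs v
        rw [min_eq_right hAB.le] at h3
        have hBfull : B.filter (fun y => v ≤ y) = B := by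
          apply Multiset.eq_of_le_of_card_le (Multiset.filter_le _ _)
          exact h3
        have hall : ∀ b ∈ B, v ≤ b := by
          intro b hb
          rw [← hBfull] at hb
          exact (Multiset.mem_filter.mp hb).2
        have hmem : v ∈ tUnion A C := by
          have hlen : j < (dsort (tUnion A C)).length := by
            rw [dsort_length]; exact hjA
          have : v ∈ dsort (tUnion A C) := by
            rw [hv, List.getD_eq_getElem _ 0 hlen]
            exact List.getElem_mem hlen
          rw [← Multiset.mem_coe, coe_dsort] at this
          exact this
        have hv1 : v ≤ 1 := by
          have := Multiset.mem_filter.mp hmem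
          rcases Multiset.mem_add.mp this.1 with h | h
          · exact (hA1 v h).2
          · exact (hC1 v h).2
        have := le_minf B hv1 hall
        exact absurd (le_trans this (le_max_left _ _)) (not_le.mpr hvt)
  refine ⟨key, ?_⟩
  by_cases hc : (tUnion B C).card ≤ (tUnion A C).card
  · left
    exact ⟨hc, fun i hi => key i (lt_min (lt_of_lt_of_le hi hc) hi)⟩
  · right
    push_neg at hc
    exact ⟨hc, fun i hi => key i (lt_min hi (hi.trans hc))⟩
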